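/- Generalized fairness of CE (Proposition 7.1): if (X_1,...,X_n) is a competitive equilibrium allocation with prices p and incomes t_1,...,t_n, then for any agent (Alice, income a, bundle A), any subset K of agents, and integers 1 ≤ l ≤ d, if a ≥ (l/d)·Σ_{i∈K} t_i then A is weakly preferred by Alice to her l-out-of-d maximin bundle of ∪_{i∈K} X_i. -/

import Mathlib

open Finset

/-- `r A B` means bundle `A` is strictly preferred to bundle `B`.
The preference is transitive, asymmetric, total (strict) and monotone. -/
def StrictMonoPref {m : ℕ} (r : Finset (Fin m) → Finset (Fin m) → Prop) : Prop :=
  (∀ A B C, r A B → r B C → r A C) ∧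
  (∀ A B, r A B → ¬ r B A) ∧
  (∀ A B : Finset (Fin m), A ≠ B → r A B ∨ r B A) ∧
  (∀ A B : Finset (Fin m), A ⊂ B → r B A)

/-- Competitive equilibrium: positive prices, the bundles partition all items,
every agent with a non-empty bundle pays exactly their income, and every agent
either strictly prefers their own bundle to, or cannot afford, any other bundle. -/
def IsCE {m n : ℕ} (t : Fin n → ℝ)
    (pref : Fin n → Finset (Fin m) → Finset (Fin m) → Prop)
    (p : Fin m → ℝ) (X : Fin n → Finset (Fin m)) : Prop :=
  (∀ k, 0 < p k) ∧
  (∀ i j, i ≠ j → Disjoint (X i) (X j)) ∧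
  (Finset.univ.biUnion X = Finset.univ) ∧
  (∀ i, X i ≠ ∅ → ∑ k ∈ X i, p k = t i) ∧
  (∀ i (Y : Finset (Fin m)), Y ≠ X i → pref i (X i) Y ∨ t i < ∑ k ∈ Y, p k)

lemma exists_l_smallest (d l : ℕ) (hld : l ≤ d) (f : Fin d → ℝ) :
    ∃ S : Finset (Fin d), S.card = l ∧ ∀ j ∈ S, ∀ j' ∉ S, f j ≤ f j' := by
  have hmem : ∀ m ∈ Finset.range l, m < d := fun m hm => lt_of_lt_of_le (mem_range.mp hm) hld
  set σ := Tuple.sort f with hσ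
  refine ⟨((Finset.range l).attachFin hmem).image σ, ?_, ?_⟩
  · rw [Finset.card_image_of_injective _ σ.injective, Finset.card_attachFin, Finset.card_range]
  · intro j hj j' hj'
    obtain ⟨i, hi, rfl⟩ := Finset.mem_image.mp hj
    have hi' : (i : ℕ) < l := mem_range.mp ((Finset.mem_attachFin hmem).mp hi)
    have hinv : l ≤ ((σ.symm j' : Fin d) : ℕ) := by
      by_contra h
      push_neg at h
      exact hj' (Finset.mem_image.mpr ⟨σ.symm j', (Finset.mem_attachFin hmem).mpr
        (mem_range.mpr h), σ.apply_symm_apply j'⟩)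
    have hle : i ≤ σ.symm j' := by rw [Fin.le_def]; omega
    have := Tuple.monotone_sort f hle
    have h2 : f (σ i) ≤ f (σ (σ.symm j')) := this
    rwa [σ.apply_symm_apply] at h2

/-- **Generalized fairness of competitive equilibria (Proposition 7.1).**
Let `(p, X)` be a competitive equilibrium for incomes `t` and preferences
`pref`.  Then for Alice (agent 0), every subset `K` of agents and integers
`1 ≤ l ≤ d` with `(l/d) · Σ_{i ∈ K} t i ≤ t 0`, Alice weakly prefers her bundle
`X 0` to her `l`-out-of-`d` maximin bundle of `⋃_{i ∈ K} X i`: for every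
partition of `⋃_{i ∈ K} X i` into `d` parts there is a union of `l` parts that
is weakly worse for Alice than `X 0`. -/
theorem CE_generalized_fairness
    (m n : ℕ) (t : Fin (n + 1) → ℝ) (htpos : ∀ i, 0 < t i)
    (pref : Fin (n + 1) → Finset (Fin m) → Finset (Fin m) → Prop)
    (hpref : ∀ i, StrictMonoPref (pref i))
    (p : Fin m → ℝ) (X : Fin (n + 1) → Finset (Fin m))
    (hce : IsCE t pref p X)
    (K : Finset (Fin (n + 1))) (l d : ℕ) (hl : 1 ≤ l) (hld : l ≤ d)
    (hinc : (l : ℝ) / d * ∑ i ∈ K, t i ≤ t 0)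
    (Y : Fin d → Finset (Fin m))
    (hdisj : ∀ j j', j ≠ j' → Disjoint (Y j) (Y j'))
    (hunion : Finset.univ.biUnion Y = K.biUnion X) :
    ∃ S : Finset (Fin d), S.card = l ∧
      (S.biUnion Y = X 0 ∨ pref 0 (X 0) (S.biUnion Y)) := by
  obtain ⟨hppos, hXdisj, -, hbudget, hopt⟩ := hce
  set f : Fin d → ℝ := fun j => ∑ k ∈ Y j, p k with hf
  obtain ⟨S, hScard, hSmin⟩ := exists_l_smallest d l hld f
  have hd0 : 0 < (d : ℝ) := by exact_mod_cast lt_of_lt_of_le hl hld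
  -- total price of the union
  have htot : ∑ j, f j ≤ ∑ i ∈ K, t i := by
    have h1 : ∑ j, f j = ∑ k ∈ Finset.univ.biUnion Y, p k :=
      (Finset.sum_biUnion (fun a _ b _ hab => hdisj a b hab)).symm
    have h2 : ∑ k ∈ K.biUnion X, p k = ∑ i ∈ K, ∑ k ∈ X i, p k :=
      Finset.sum_biUnion (fun a _ b _ hab => hXdisj a b hab)
    rw [h1, hunion, h2]
    refine Finset.sum_le_sum fun i _ => ?_
    by_cases hXi : X i = ∅
    · simp [hXi, le_of_lt (htpos i)]
    · exact le_of_eq (hbudget i hXi)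
  -- averaging: d * Σ_S f ≤ l * Σ f
  have hkey : (d : ℝ) * ∑ j ∈ S, f j ≤ (l : ℝ) * ∑ j, f j := by
    have hcardc : Sᶜ.card = d - l := by
      rw [Finset.card_compl, hScard]; simp
    have h1 : ((d - l : ℕ) : ℝ) * ∑ j ∈ S, f j ≤ (l : ℝ) * ∑ j ∈ Sᶜ, f j := by
      calc ((d - l : ℕ) : ℝ) * ∑ j ∈ S, f j = ∑ j ∈ S, ∑ _j' ∈ Sᶜ, f j := by
            simp [Finset.sum_const, hcardc, Finset.mul_sum, mul_comm]
        _ ≤ ∑ j ∈ S, ∑ j' ∈ Sᶜ, f j' := by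
            refine Finset.sum_le_sum fun j hj => Finset.sum_le_sum fun j' hj' => ?_
            exact hSmin j hj j' (Finset.mem_compl.mp hj')
        _ = (l : ℝ) * ∑ j' ∈ Sᶜ, f j' := by
            rw [Finset.sum_const, hScard]; simp
    have hsplit : ∑ j, f j = ∑ j ∈ S, f j + ∑ j ∈ Sᶜ, f j :=
      (Finset.sum_add_sum_compl S f).symm
    have hdl : ((d - l : ℕ) : ℝ) = (d : ℝ) - l := by
      have := hld; push_cast [Nat.cast_sub hld]; ring
    rw [hsplit]
    rw [hdl] at h1; nlinarith [h1]
  have hSprice : ∑ k ∈ S.biUnion Y, p k ≤ t 0 := by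
    have h1 : ∑ k ∈ S.biUnion Y, p k = ∑ j ∈ S, f j :=
      Finset.sum_biUnion (fun a _ b _ hab => hdisj a b hab)
    have h2 : ∑ j ∈ S, f j ≤ (l : ℝ) / d * ∑ j, f j := by
      rw [div_mul_eq_mul_div, le_div_iff₀ hd0, mul_comm _ (d:ℝ)]; exact hkey
    have h3 : (l : ℝ) / d * ∑ j, f j ≤ (l : ℝ) / d * ∑ i ∈ K, t i := by
      apply mul_le_mul_of_nonneg_left htot
      positivity
    linarith
  refine ⟨S, hScard, ?_⟩
  by_cases hEq : S.biUnion Y = X 0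
  · exact Or.inl hEq
  · rcases hopt 0 (S.biUnion Y) hEq with h | h
    · exact Or.inr h
    · exact absurd hSprice (not_le.mpr h)
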